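/- Let F be a class of weighted graphs and let m be a positive integer. If there exists a function f : (0,∞) → (0,∞) such that for every (G,φ) ∈ F and every ℓ > 0 the graph (G,φ)^ℓ has an m-coloring with weak diameter in (G,φ)^ℓ at most f(ℓ), then the asymptotic dimension of F is at most m − 1. -/

import Mathlib

open scoped ENNReal

/-- The length of a walk in an edge-weighted graph: the sum of the weights of its edges. -/
def walkLen {V : Type} {G : SimpleGraph V} (w : Sym2 V → ℝ) {x y : V} (p : G.Walk x y) : ℝ :=
  (p.edges.map w).sum

/-- The distance between two vertices of an edge-weighted graph: the infimum of the lengths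
of paths between them (`⊤` if there is no such path). -/
noncomputable def wDist {V : Type} (G : SimpleGraph V) (w : Sym2 V → ℝ) (x y : V) : ℝ≥0∞ :=
  ⨅ q : {q : G.Walk x y // q.IsPath}, ENNReal.ofReal (walkLen w q.1)

lemma wDist_comm {V : Type} (G : SimpleGraph V) (w : Sym2 V → ℝ) (x y : V) :
    wDist G w x y = wDist G w y x := by
  have key : ∀ a b : V, wDist G w a b ≤ wDist G w b a := by
    intro a b
    refine le_iInf fun q => ?_
    refine iInf_le_of_le ⟨q.1.reverse, q.2.reverse⟩ ?_
    simp [walkLen, List.sum_reverse]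
  exact le_antisymm (key x y) (key y x)

/-- The power graph: two distinct vertices are adjacent iff their weighted distance
is at most `r`. -/
noncomputable def powerGraph {V : Type} (G : SimpleGraph V) (w : Sym2 V → ℝ) (r : ℝ) :
    SimpleGraph V where
  Adj x y := x ≠ y ∧ wDist G w x y ≤ ENNReal.ofReal r
  symm := by
    constructor
    rintro x y ⟨hne, hle⟩
    exact ⟨hne.symm, by rwa [wDist_comm]⟩
  loopless := ⟨fun x h => h.1 rfl⟩

/-- The unit-length (hop) distance in an unweighted graph. -/
noncomputable def hopDist {V : Type} (L : SimpleGraph V) (x y : V) : ℝ≥0∞ :=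
  ⨅ q : L.Walk x y, (q.length : ℝ≥0∞)

/-- Same-colour adjacency within a vertex set `A`. -/
def colorGraph {V : Type} (K : SimpleGraph V) (A : Set V) {m : ℕ} (c : V → Fin m) :
    SimpleGraph V where
  Adj x y := K.Adj x y ∧ x ∈ A ∧ y ∈ A ∧ c x = c y
  symm := by
    constructor
    rintro x y ⟨h, hx, hy, hc⟩
    exact ⟨h.symm, hy, hx, hc.symm⟩
  loopless := ⟨fun x h => K.irrefl h.1⟩

/-- The colouring `c` of the subgraph of `K` induced on `A` has weak diameter, measured by the
hop distance of `L`, at most `N`: any two vertices of a monochromatic component of `K ↾ A` are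
at hop distance at most `N` in `L`. -/
def HasWeakDiamLE {V : Type} (K : SimpleGraph V) (A : Set V) (L : SimpleGraph V) {m : ℕ}
    (c : V → Fin m) (N : ℝ) : Prop :=
  ∀ x ∈ A, ∀ y ∈ A, (colorGraph K A c).Reachable x y → hopDist L x y ≤ ENNReal.ofReal N

/-- `nbhd G w r S`: vertices joined to `S` by a path of weighted length at most `r`. -/
def nbhd {V : Type} (G : SimpleGraph V) (w : Sym2 V → ℝ) (r : ℝ) (S : Set V) : Set V :=
  {v | ∃ s ∈ S, ∃ q : G.Walk v s, q.IsPath ∧ walkLen w q ≤ r}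

/-- Deleting a set of vertices (keeping them as isolated vertices of the ambient type). -/
def delVerts {V : Type} (G : SimpleGraph V) (Z : Set V) : SimpleGraph V where
  Adj x y := G.Adj x y ∧ x ∉ Z ∧ y ∉ Z
  symm := by
    constructor
    rintro x y ⟨h, hx, hy⟩
    exact ⟨h.symm, hy, hx⟩
  loopless := ⟨fun x h => G.irrefl h.1⟩

/-- A weighted graph: a finite simple graph together with positive edge weights. -/
structure WGraph : Type 1 where
  V : Type
  fin : Finite V
  G : SimpleGraph V
  w : Sym2 V → ℝ
  pos : ∀ e ∈ G.edgeSet, 0 < w e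

/-- The extended metric on the vertex set of a weighted graph. -/
noncomputable def WGraph.dist (W : WGraph) : W.V → W.V → ℝ≥0∞ := wDist W.G W.w

/-- All edge weights lie in `(0, ℓ]`. -/
def WGraph.IsBounded (W : WGraph) (ℓ : ℝ) : Prop := ∀ e ∈ W.G.edgeSet, W.w e ≤ ℓ

/-- `f` is an `n`-dimensional control function for the extended metric `d`. -/
def IsControlOn {X : Type} (d : X → X → ℝ≥0∞) (n : ℕ) (f : ℝ → ℝ) : Prop :=
  ∀ r : ℝ, 0 < r → ∃ U : Fin (n + 1) → Set (Set X),
    (∀ x : X, ∃ i, ∃ s ∈ U i, x ∈ s) ∧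
    (∀ i, ∀ s ∈ U i, ∀ t ∈ U i, s ≠ t → ∀ x ∈ s, ∀ y ∈ t, ENNReal.ofReal r < d x y) ∧
    (∀ i, ∀ s ∈ U i, ∀ x ∈ s, ∀ y ∈ s, d x y ≤ ENNReal.ofReal (f r))

/-- The asymptotic dimension of a class of weighted graphs is at most `n`. -/
def asdimLE (F : Set WGraph) (n : ℕ) : Prop :=
  ∃ f : ℝ → ℝ, (∀ x, 0 < x → 0 < f x) ∧ ∀ W ∈ F, IsControlOn W.dist n f

/-- The Assouad–Nagata dimension of a class of weighted graphs is at most `n`: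
some dilation is a common `n`-dimensional control function. -/
def ANdimLE (F : Set WGraph) (n : ℕ) : Prop :=
  ∃ (f : ℝ → ℝ) (c : ℝ), 0 < c ∧ (∀ x, 0 < x → 0 < f x) ∧ (∀ x, 0 < x → f x ≤ c * x) ∧
    ∀ W ∈ F, IsControlOn W.dist n f

/-- `H` is a minor of `G`: there are pairwise disjoint nonempty connected branch sets in `G`,
one for each vertex of `H`, with branch sets of adjacent vertices joined by an edge. -/
def IsMinorOf {α β : Type} (H : SimpleGraph β) (G : SimpleGraph α) : Prop :=
  ∃ B : β → Set α,
    (∀ h, (B h).Nonempty) ∧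
    (∀ h h', h ≠ h' → Disjoint (B h) (B h')) ∧
    (∀ h, (G.induce (B h)).Connected) ∧
    (∀ h h', H.Adj h h' → ∃ a ∈ B h, ∃ b ∈ B h', G.Adj a b)
/-- Vertices of the refinement `(G,w,r)`: original vertices plus, for each edge `e = xy` of `G`
and each end `x`, internal vertices `(x,y,i)`, `1 ≤ i ≤ ⌈w(e)/r⌉ - 1`, of the path `P_{e,x}`. -/
abbrev SubVert {V : Type} (G : SimpleGraph V) (w : Sym2 V → ℝ) (r : ℝ) : Type :=
  V ⊕ {p : V × V × ℕ // G.Adj p.1 p.2.1 ∧ 1 ≤ p.2.2 ∧ p.2.2 ≤ ⌈w s(p.1, p.2.1) / r⌉₊ - 1}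

def subRel {V : Type} (G : SimpleGraph V) (w : Sym2 V → ℝ) (r : ℝ) :
    SubVert G w r → SubVert G w r → Prop
  | Sum.inl x, Sum.inl y => G.Adj x y ∧ ⌈w s(x, y) / r⌉₊ = 1
  | Sum.inl x, Sum.inr q => (x = q.1.1 ∧ q.1.2.2 = 1) ∨
      (x = q.1.2.1 ∧ q.1.2.2 = ⌈w s(q.1.1, q.1.2.1) / r⌉₊ - 1)
  | Sum.inr _, Sum.inl _ => False
  | Sum.inr p, Sum.inr q => p.1.1 = q.1.1 ∧ p.1.2.1 = q.1.2.1 ∧ q.1.2.2 = p.1.2.2 + 1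

/-- The underlying graph of the refinement `(G,w,r)`: each edge `e = xy` is replaced by two
internally disjoint paths `P_{e,x}`, `P_{e,y}` between `x` and `y` with `⌈w(e)/r⌉` edges
(which degenerate to the single original edge when `⌈w(e)/r⌉ = 1`). -/
def subGraph {V : Type} (G : SimpleGraph V) (w : Sym2 V → ℝ) (r : ℝ) :
    SimpleGraph (SubVert G w r) :=
  SimpleGraph.fromRel (subRel G w r)

/-- The edge weights of the refinement `(G,w,r)`: in `P_{e,x}` the edge incident with `x` has
weight `w(e) - r·(⌈w(e)/r⌉ - 1)` and all other edges have weight `r`. -/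
noncomputable def subW {V : Type} (G : SimpleGraph V) (w : Sym2 V → ℝ) (r : ℝ) :
    Sym2 (SubVert G w r) → ℝ :=
  letI : DecidableEq V := Classical.decEq V
  Sym2.lift ⟨fun a b =>
    match a, b with
    | Sum.inl x, Sum.inl y => w s(x, y)
    | Sum.inl x, Sum.inr q =>
        if x = q.1.1 ∧ q.1.2.2 = 1 then
          w s(q.1.1, q.1.2.1) - r * ((⌈w s(q.1.1, q.1.2.1) / r⌉₊ - 1 : ℕ) : ℝ)
        else r
    | Sum.inr q, Sum.inl x =>
        if x = q.1.1 ∧ q.1.2.2 = 1 then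
          w s(q.1.1, q.1.2.1) - r * ((⌈w s(q.1.1, q.1.2.1) / r⌉₊ - 1 : ℕ) : ℝ)
        else r
    | Sum.inr _, Sum.inr _ => r, by
      rintro (x | p) (y | q)
      · show w s(x, y) = w s(y, x)
        rw [Sym2.eq_swap]
      · rfl
      · rfl
      · rfl⟩

/-- The power graph `(G,w)^r`, whose vertex set is the vertex set of the refinement `(G,w,r)`,
two distinct vertices being adjacent iff their distance in `(G,w,r)` is at most `r`. -/
noncomputable def subPower {V : Type} (G : SimpleGraph V) (w : Sym2 V → ℝ) (r : ℝ) :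
    SimpleGraph (SubVert G w r) :=
  powerGraph (subGraph G w r) (subW G w r) r
-- test evaluation lemmas
section
variable {V : Type} (G : SimpleGraph V) (w : Sym2 V → ℝ) (r : ℝ)

lemma subW_inl_inl (x y : V) : subW G w r s(Sum.inl x, Sum.inl y) = w s(x, y) := rfl

lemma subW_inr_inr (p q) : subW G w r s(Sum.inr p, Sum.inr q) = r := rfl

lemma subW_inl_inr (x : V) (q) (h : x = q.1.1 ∧ q.1.2.2 = 1) :
    subW G w r s(Sum.inl x, Sum.inr q)
      = w s(q.1.1, q.1.2.1) - r * ((⌈w s(q.1.1, q.1.2.1) / r⌉₊ - 1 : ℕ) : ℝ) := by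
  simp only [subW, Sym2.lift_mk]
  rw [if_pos h]

lemma subW_inl_inr' (x : V) (q) (h : ¬(x = q.1.1 ∧ q.1.2.2 = 1)) :
    subW G w r s(Sum.inl x, Sum.inr q) = r := by
  simp only [subW, Sym2.lift_mk]
  rw [if_neg h]

end

section basic
variable {V : Type} {G : SimpleGraph V} (w : Sym2 V → ℝ)

lemma walkLen_nil {x : V} : walkLen w (SimpleGraph.Walk.nil : G.Walk x x) = 0 := rfl

lemma walkLen_cons {x y z : V} (h : G.Adj x y) (p : G.Walk y z) :
    walkLen w (SimpleGraph.Walk.cons h p) = w s(x, y) + walkLen w p := by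
  simp [walkLen]

lemma walkLen_append {x y z : V} (p : G.Walk x y) (q : G.Walk y z) :
    walkLen w (p.append q) = walkLen w p + walkLen w q := by
  simp [walkLen, SimpleGraph.Walk.edges_append]

variable (hw : ∀ e ∈ G.edgeSet, 0 ≤ w e)
include hw

lemma walkLen_nonneg {x y : V} (p : G.Walk x y) : 0 ≤ walkLen w p := by
  refine List.sum_nonneg ?_
  intro a ha
  obtain ⟨e, he, rfl⟩ := List.mem_map.mp ha
  exact hw e (p.edges_subset_edgeSet he)

lemma walkLen_dropUntil_le [DecidableEq V] {x y : V} (p : G.Walk x y) (u : V)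
    (hu : u ∈ p.support) :
    walkLen w (p.dropUntil u hu) ≤ walkLen w p := by
  conv_rhs => rw [← p.take_spec hu]
  rw [walkLen_append]
  have := walkLen_nonneg w hw (p.takeUntil u hu)
  linarith

lemma walkLen_bypass_le [DecidableEq V] {x y : V} (p : G.Walk x y) :
    walkLen w p.bypass ≤ walkLen w p := by
  induction p with
  | nil => simp [SimpleGraph.Walk.bypass]
  | cons h p ih =>
    rw [SimpleGraph.Walk.bypass]
    split_ifs with hb
    · refine le_trans (walkLen_dropUntil_le w hw _ _ hb) ?_
      rw [walkLen_cons]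
      have : 0 ≤ w s(_, _) := hw _ h
      linarith
    · rw [walkLen_cons, walkLen_cons]
      linarith

lemma wDist_le_walkLen {x y : V} (p : G.Walk x y) :
    wDist G w x y ≤ ENNReal.ofReal (walkLen w p) := by
  classical
  refine le_trans (iInf_le _ ⟨p.bypass, p.bypass_isPath⟩) ?_
  exact ENNReal.ofReal_le_ofReal (walkLen_bypass_le w hw p)

lemma wDist_self_le {x : V} : wDist G w x x ≤ 0 := by
  have := wDist_le_walkLen w hw (SimpleGraph.Walk.nil : G.Walk x x)
  simpa [walkLen_nil] using this

lemma wDist_triangle (x y z : V) :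
    wDist G w x z ≤ wDist G w x y + wDist G w y z := by
  have h1 : wDist G w x y + wDist G w y z
      = ⨅ p : {q : G.Walk x y // q.IsPath}, (ENNReal.ofReal (walkLen w p.1) + wDist G w y z) := by
    rw [wDist, ENNReal.iInf_add]
  rw [h1]
  refine le_iInf fun p => ?_
  have h2 : ENNReal.ofReal (walkLen w p.1) + wDist G w y z
      = ⨅ q : {q : G.Walk y z // q.IsPath},
          (ENNReal.ofReal (walkLen w p.1) + ENNReal.ofReal (walkLen w q.1)) := by
    rw [wDist, ENNReal.add_iInf]
  rw [h2]
  refine le_iInf fun q => ?_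
  rw [← ENNReal.ofReal_add (walkLen_nonneg w hw p.1) (walkLen_nonneg w hw q.1),
    ← walkLen_append]
  exact wDist_le_walkLen w hw _

lemma wDist_le_of_adj {x y : V} (h : G.Adj x y) :
    wDist G w x y ≤ ENNReal.ofReal (w s(x, y)) := by
  have := wDist_le_walkLen w hw (SimpleGraph.Walk.cons h SimpleGraph.Walk.nil)
  simpa [walkLen_cons, walkLen_nil] using this

end basic

section phi
variable {V : Type} (G : SimpleGraph V) (w : Sym2 V → ℝ) (r : ℝ)

lemma rho_pos {a : ℝ} (ha : 0 < a) (hr : 0 < r) :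
    0 < a - r * ((⌈a / r⌉₊ - 1 : ℕ) : ℝ) := by
  have hk : 1 ≤ ⌈a / r⌉₊ := Nat.one_le_ceil_iff.mpr (by positivity)
  have h1 : (⌈a / r⌉₊ : ℝ) < a / r + 1 := Nat.ceil_lt_add_one (by positivity)
  have h2 : ((⌈a / r⌉₊ - 1 : ℕ) : ℝ) = (⌈a / r⌉₊ : ℝ) - 1 := by
    push_cast [hk]; ring
  rw [h2]
  have h3 : (⌈a / r⌉₊ : ℝ) - 1 < a / r := by linarith
  have h4 : r * ((⌈a / r⌉₊ : ℝ) - 1) < r * (a / r) := by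
    exact mul_lt_mul_of_pos_left h3 hr
  have h5 : r * (a / r) = a := by field_simp
  linarith

/-- The potential function used to bound `wDist G w` below by sub-distances. -/
noncomputable def phi (y : V) : SubVert G w r → ℝ≥0∞
  | Sum.inl x => wDist G w x y
  | Sum.inr q =>
      min (ENNReal.ofReal (w s(q.1.1, q.1.2.1)
              - r * ((⌈w s(q.1.1, q.1.2.1) / r⌉₊ - 1 : ℕ) : ℝ)
              + ((q.1.2.2 - 1 : ℕ) : ℝ) * r) + wDist G w q.1.1 y)
          (ENNReal.ofReal (((⌈w s(q.1.1, q.1.2.1) / r⌉₊ - q.1.2.2 : ℕ) : ℝ) * r)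
              + wDist G w q.1.2.1 y)

variable (hw : ∀ e ∈ G.edgeSet, 0 ≤ w e)
include hw

lemma tri_edge {x z : V} (y : V) (h : G.Adj x z) :
    wDist G w x y ≤ ENNReal.ofReal (w s(x, z)) + wDist G w z y :=
  le_trans (wDist_triangle w hw x z y)
    (add_le_add_left (wDist_le_of_adj w hw h) _)

end phi

section phiadj
variable {V : Type} (G : SimpleGraph V) (w : Sym2 V → ℝ) (r : ℝ)

lemma le_add_min {x c u v : ℝ≥0∞} (h1 : x ≤ c + u) (h2 : x ≤ c + v) : x ≤ c + min u v := by
  rcases min_cases u v with ⟨h, -⟩ | ⟨h, -⟩ <;> rw [h] <;> assumption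

lemma step_ineq {c1 c2 r : ℝ} (hr : 0 ≤ r) (h : c1 ≤ c2 + 1) : c1 * r ≤ r + c2 * r := by
  nlinarith

lemma phi_adj (hwp : ∀ e ∈ G.edgeSet, 0 < w e) (hr : 0 < r) (y : V) {a b : SubVert G w r}
    (hab : (subGraph G w r).Adj a b) :
    phi G w r y a ≤ ENNReal.ofReal (subW G w r s(a, b)) + phi G w r y b := by
  have hw0 : ∀ e ∈ G.edgeSet, 0 ≤ w e := fun e he => (hwp e he).le
  rw [subGraph, SimpleGraph.fromRel_adj] at hab
  obtain ⟨hne, hrel⟩ := hab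
  rcases a with x | p <;> rcases b with z | q
  · -- inl x, inl z
    simp only [subRel] at hrel
    have hadj : G.Adj x z := by
      rcases hrel with ⟨h, -⟩ | ⟨h, -⟩
      · exact h
      · exact h.symm
    rw [subW_inl_inl]
    exact tri_edge G w hw0 y hadj
  · -- inl x, inr q
    obtain ⟨⟨xq, zq, j⟩, hq⟩ := q
    simp only [subRel] at hrel
    simp only [phi]
    rcases hrel with (⟨h1, h2⟩ | ⟨h1, h2⟩) | hF
    · -- x = xq, j = 1
      subst h1; subst h2
      have hadj : G.Adj x zq := hq.1
      have ha : 0 < w s(x, zq) := hwp _ hadj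
      have hρ : 0 < w s(x, zq) - r * ((⌈w s(x, zq) / r⌉₊ - 1 : ℕ) : ℝ) := rho_pos r ha hr
      rw [subW_inl_inr G w r x ⟨(x, zq, 1), hq⟩ ⟨rfl, rfl⟩]
      refine le_add_min ?_ ?_
      · exact le_trans le_add_self le_add_self
      · rw [← add_assoc, ← ENNReal.ofReal_add hρ.le (by positivity)]
        have hsum : w s(x, zq) - r * ((⌈w s(x, zq) / r⌉₊ - 1 : ℕ) : ℝ)
            + ((⌈w s(x, zq) / r⌉₊ - 1 : ℕ) : ℝ) * r = w s(x, zq) := by ring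
        rw [hsum]
        exact tri_edge G w hw0 y hadj
    · -- x = zq, j = K - 1
      subst h1; subst h2
      have hadj : G.Adj xq x := hq.1
      have hj1 : 1 ≤ ⌈w s(xq, x) / r⌉₊ - 1 := hq.2.1
      have ha : 0 < w s(xq, x) := hwp _ hadj
      have hρ : 0 < w s(xq, x) - r * ((⌈w s(xq, x) / r⌉₊ - 1 : ℕ) : ℝ) := rho_pos r ha hr
      have hK1 : 1 ≤ ⌈w s(xq, x) / r⌉₊ := Nat.one_le_ceil_iff.mpr (by positivity)
      have hK2 : 2 ≤ ⌈w s(xq, x) / r⌉₊ := by omega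
      rw [subW_inl_inr' G w r x ⟨(xq, x, ⌈w s(xq, x) / r⌉₊ - 1), hq⟩
        (fun hcon => G.ne_of_adj hadj hcon.1.symm)]
      refine le_add_min ?_ ?_
      · rw [← add_assoc, ← ENNReal.ofReal_add hr.le
          (add_nonneg hρ.le (mul_nonneg (Nat.cast_nonneg _) hr.le))]
        have hsw : w s(x, xq) = w s(xq, x) := by rw [Sym2.eq_swap]
        have hsum : r + (w s(xq, x) - r * ((⌈w s(xq, x) / r⌉₊ - 1 : ℕ) : ℝ)
            + ((⌈w s(xq, x) / r⌉₊ - 1 - 1 : ℕ) : ℝ) * r) = w s(x, xq) := by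
          rw [hsw, Nat.cast_sub hK1,
            show ⌈w s(xq, x) / r⌉₊ - 1 - 1 = ⌈w s(xq, x) / r⌉₊ - 2 from rfl,
            Nat.cast_sub hK2]
          push_cast
          ring
        rw [hsum]
        exact tri_edge G w hw0 y hadj.symm
      · exact le_trans le_add_self le_add_self
    · exact hF.elim
  · -- inr p, inl z
    obtain ⟨⟨xp, zp, i⟩, hp⟩ := p
    simp only [subRel] at hrel
    simp only [phi]
    rcases hrel with hF | (⟨h1, h2⟩ | ⟨h1, h2⟩)
    · exact hF.elim
    · -- z = xp, i = 1
      subst h1; subst h2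
      have hswap : (s(Sum.inr ⟨(z, zp, 1), hp⟩, Sum.inl z) :
          Sym2 (SubVert G w r)) = s(Sum.inl z, Sum.inr ⟨(z, zp, 1), hp⟩) := Sym2.eq_swap
      rw [hswap, subW_inl_inr G w r z ⟨(z, zp, 1), hp⟩ ⟨rfl, rfl⟩]
      refine le_trans (min_le_left _ _) (le_of_eq ?_)
      norm_num
    · -- z = zp, i = K - 1
      subst h1; subst h2
      have hadj : G.Adj xp z := hp.1
      have hi1 : 1 ≤ ⌈w s(xp, z) / r⌉₊ - 1 := hp.2.1
      have hswap : (s(Sum.inr ⟨(xp, z, ⌈w s(xp, z) / r⌉₊ - 1), hp⟩, Sum.inl z) :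
          Sym2 (SubVert G w r)) = s(Sum.inl z, Sum.inr ⟨(xp, z, ⌈w s(xp, z) / r⌉₊ - 1), hp⟩) :=
        Sym2.eq_swap
      rw [hswap, subW_inl_inr' G w r z ⟨(xp, z, ⌈w s(xp, z) / r⌉₊ - 1), hp⟩
        (fun hcon => G.ne_of_adj hadj hcon.1.symm)]
      refine le_trans (min_le_right _ _) (le_of_eq ?_)
      rw [show ⌈w s(xp, z) / r⌉₊ - (⌈w s(xp, z) / r⌉₊ - 1) = 1 by omega]
      norm_num
  · -- inr p, inr q
    obtain ⟨⟨xp, zp, i⟩, hp⟩ := p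
    obtain ⟨⟨xq, zq, j⟩, hq⟩ := q
    simp only [subRel] at hrel
    rw [subW_inr_inr]
    simp only [phi]
    have key : ∀ (i j : ℕ) (hip : 1 ≤ i) (hjp : 1 ≤ j) (hj : j = i + 1)
        (hadj : G.Adj xp zp),
        (ENNReal.ofReal (w s(xp, zp) - r * ((⌈w s(xp, zp) / r⌉₊ - 1 : ℕ) : ℝ)
            + ((i - 1 : ℕ) : ℝ) * r) + wDist G w xp y) ⊓
          (ENNReal.ofReal (((⌈w s(xp, zp) / r⌉₊ - i : ℕ) : ℝ) * r) + wDist G w zp y)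
        ≤ ENNReal.ofReal r +
          ((ENNReal.ofReal (w s(xp, zp) - r * ((⌈w s(xp, zp) / r⌉₊ - 1 : ℕ) : ℝ)
              + ((j - 1 : ℕ) : ℝ) * r) + wDist G w xp y) ⊓
            (ENNReal.ofReal (((⌈w s(xp, zp) / r⌉₊ - j : ℕ) : ℝ) * r) + wDist G w zp y)) ∧
        (ENNReal.ofReal (w s(xp, zp) - r * ((⌈w s(xp, zp) / r⌉₊ - 1 : ℕ) : ℝ)
            + ((j - 1 : ℕ) : ℝ) * r) + wDist G w xp y) ⊓
          (ENNReal.ofReal (((⌈w s(xp, zp) / r⌉₊ - j : ℕ) : ℝ) * r) + wDist G w zp y)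
        ≤ ENNReal.ofReal r +
          ((ENNReal.ofReal (w s(xp, zp) - r * ((⌈w s(xp, zp) / r⌉₊ - 1 : ℕ) : ℝ)
              + ((i - 1 : ℕ) : ℝ) * r) + wDist G w xp y) ⊓
            (ENNReal.ofReal (((⌈w s(xp, zp) / r⌉₊ - i : ℕ) : ℝ) * r) + wDist G w zp y)) := by
      intro i j hip hjp hj hadj
      have ha : 0 < w s(xp, zp) := hwp _ hadj
      have hρ : 0 < w s(xp, zp) - r * ((⌈w s(xp, zp) / r⌉₊ - 1 : ℕ) : ℝ) := rho_pos r ha hr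
      constructor
      · refine le_add_min ?_ ?_
        · refine le_trans (min_le_left _ _) ?_
          rw [← add_assoc, ← ENNReal.ofReal_add hr.le
            (add_nonneg hρ.le (mul_nonneg (Nat.cast_nonneg _) hr.le))]
          refine add_le_add_left (ENNReal.ofReal_le_ofReal ?_) _
          have hc : ((i - 1 : ℕ) : ℝ) ≤ ((j - 1 : ℕ) : ℝ) + 1 := by
            have : i - 1 ≤ (j - 1) + 1 := by omega
            exact_mod_cast this
          have := step_ineq hr.le hc
          linarith
        · refine le_trans (min_le_right _ _) ?_
          rw [← add_assoc, ← ENNReal.ofReal_add hr.le (by positivity)]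
          refine add_le_add_left (ENNReal.ofReal_le_ofReal ?_) _
          refine step_ineq hr.le ?_
          have : ⌈w s(xp, zp) / r⌉₊ - i ≤ (⌈w s(xp, zp) / r⌉₊ - j) + 1 := by omega
          exact_mod_cast this
      · refine le_add_min ?_ ?_
        · refine le_trans (min_le_left _ _) ?_
          rw [← add_assoc, ← ENNReal.ofReal_add hr.le
            (add_nonneg hρ.le (mul_nonneg (Nat.cast_nonneg _) hr.le))]
          refine add_le_add_left (ENNReal.ofReal_le_ofReal ?_) _
          have hc : ((j - 1 : ℕ) : ℝ) ≤ ((i - 1 : ℕ) : ℝ) + 1 := by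
            have : j - 1 ≤ (i - 1) + 1 := by omega
            exact_mod_cast this
          have := step_ineq hr.le hc
          linarith
        · refine le_trans (min_le_right _ _) ?_
          rw [← add_assoc, ← ENNReal.ofReal_add hr.le (by positivity)]
          refine add_le_add_left (ENNReal.ofReal_le_ofReal ?_) _
          refine step_ineq hr.le ?_
          have : ⌈w s(xp, zp) / r⌉₊ - j ≤ (⌈w s(xp, zp) / r⌉₊ - i) + 1 := by omega
          exact_mod_cast this
    rcases hrel with ⟨h1, h2, h3⟩ | ⟨h1, h2, h3⟩
    · -- j = i + 1
      subst h1; subst h2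
      exact (key i j hp.2.1 hq.2.1 h3 hp.1).1
    · -- i = j + 1
      subst h1; subst h2
      exact (key j i hq.2.1 hp.2.1 h3 hq.1).2

end phiadj

section subdist
variable {V : Type} (G : SimpleGraph V) (w : Sym2 V → ℝ) (r : ℝ)

lemma subW_adj_pos (hwp : ∀ e ∈ G.edgeSet, 0 < w e) (hr : 0 < r)
    {a b : SubVert G w r} (hab : (subGraph G w r).Adj a b) :
    0 < subW G w r s(a, b) := by
  rw [subGraph, SimpleGraph.fromRel_adj] at hab
  obtain ⟨hne, hrel⟩ := hab
  rcases a with x | p <;> rcases b with z | q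
  · have hadj : G.Adj x z := by
      rcases hrel with ⟨h, -⟩ | ⟨h, -⟩
      · exact h
      · exact h.symm
    rw [subW_inl_inl]
    exact hwp _ hadj
  · by_cases hc : x = q.1.1 ∧ q.1.2.2 = 1
    · rw [subW_inl_inr G w r x q hc]
      exact rho_pos r (hwp _ q.2.1) hr
    · rw [subW_inl_inr' G w r x q hc]
      exact hr
  · have hswap : (s(Sum.inr p, Sum.inl z) : Sym2 (SubVert G w r))
        = s(Sum.inl z, Sum.inr p) := Sym2.eq_swap
    rw [hswap]
    by_cases hc : z = p.1.1 ∧ p.1.2.2 = 1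
    · rw [subW_inl_inr G w r z p hc]
      exact rho_pos r (hwp _ p.2.1) hr
    · rw [subW_inl_inr' G w r z p hc]
      exact hr
  · rw [subW_inr_inr]
    exact hr

lemma subW_edge_nonneg (hwp : ∀ e ∈ G.edgeSet, 0 < w e) (hr : 0 < r) :
    ∀ e ∈ (subGraph G w r).edgeSet, 0 ≤ subW G w r e := by
  intro e
  induction e with
  | _ a b =>
    intro he
    exact (subW_adj_pos G w r hwp hr he).le

lemma phi_le_walkLen (hwp : ∀ e ∈ G.edgeSet, 0 < w e) (hr : 0 < r) (y : V)
    {a c : SubVert G w r} (q : (subGraph G w r).Walk a c) (hc : c = Sum.inl y) :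
    phi G w r y a ≤ ENNReal.ofReal (walkLen (subW G w r) q) := by
  have hw0 : ∀ e ∈ G.edgeSet, 0 ≤ w e := fun e he => (hwp e he).le
  induction q with
  | nil =>
    subst hc
    simp only [phi, walkLen_nil, ENNReal.ofReal_zero]
    exact wDist_self_le w hw0
  | cons h p ih =>
    have ih := ih hc
    rw [walkLen_cons,
      ENNReal.ofReal_add (subW_adj_pos G w r hwp hr h).le
        (walkLen_nonneg _ (subW_edge_nonneg G w r hwp hr) p)]
    exact le_trans (phi_adj G w r hwp hr y h) (add_le_add_right ih _)

/-- Lemma B: the weighted distance in `G` is at most the weighted distance in the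
refinement between the corresponding original vertices. -/
lemma wDist_le_subDist (hwp : ∀ e ∈ G.edgeSet, 0 < w e) (hr : 0 < r) (x y : V) :
    wDist G w x y ≤ wDist (subGraph G w r) (subW G w r) (Sum.inl x) (Sum.inl y) := by
  refine le_iInf fun q => ?_
  have := phi_le_walkLen G w r hwp hr y q.1 rfl
  simpa only [phi] using this

end subdist

section lemA
variable {V : Type} (G : SimpleGraph V) (w : Sym2 V → ℝ) (r : ℝ)

lemma exists_walk_from_idx (hwp : ∀ e ∈ G.edgeSet, 0 < w e) (hr : 0 < r)
    {x z : V} (hadj : G.Adj x z) :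
    ∀ (d i : ℕ) (hi1 : 1 ≤ i) (hi2 : i ≤ ⌈w s(x, z) / r⌉₊ - 1),
      ⌈w s(x, z) / r⌉₊ - 1 - i = d →
      ∃ q : (subGraph G w r).Walk (Sum.inr ⟨(x, z, i), hadj, hi1, hi2⟩) (Sum.inl z),
        walkLen (subW G w r) q = ((⌈w s(x, z) / r⌉₊ - i : ℕ) : ℝ) * r := by
  intro d
  induction d with
  | zero =>
    intro i hi1 hi2 hd
    have hieq : i = ⌈w s(x, z) / r⌉₊ - 1 := by omega
    have hadj' : (subGraph G w r).Adj (Sum.inr ⟨(x, z, i), hadj, hi1, hi2⟩) (Sum.inl z) := by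
      rw [subGraph, SimpleGraph.fromRel_adj]
      exact ⟨by simp, Or.inr (Or.inr ⟨rfl, hieq⟩)⟩
    refine ⟨SimpleGraph.Walk.cons hadj' SimpleGraph.Walk.nil, ?_⟩
    rw [walkLen_cons, walkLen_nil]
    have hswap : (s(Sum.inr ⟨(x, z, i), hadj, hi1, hi2⟩, Sum.inl z) : Sym2 (SubVert G w r))
        = s(Sum.inl z, Sum.inr ⟨(x, z, i), hadj, hi1, hi2⟩) := Sym2.eq_swap
    rw [hswap, subW_inl_inr' G w r z ⟨(x, z, i), hadj, hi1, hi2⟩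
      (fun hcon => G.ne_of_adj hadj hcon.1.symm)]
    rw [show ⌈w s(x, z) / r⌉₊ - i = 1 by omega]
    norm_num
  | succ d ih =>
    intro i hi1 hi2 hd
    have hi2' : i + 1 ≤ ⌈w s(x, z) / r⌉₊ - 1 := by omega
    have hadj' : (subGraph G w r).Adj (Sum.inr ⟨(x, z, i), hadj, hi1, hi2⟩)
        (Sum.inr ⟨(x, z, i + 1), hadj, Nat.le_add_left 1 i, hi2'⟩) := by
      rw [subGraph, SimpleGraph.fromRel_adj]
      refine ⟨?_, Or.inl ⟨rfl, rfl, rfl⟩⟩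
      intro hcon
      simp only [Sum.inr.injEq, Subtype.mk.injEq, Prod.mk.injEq] at hcon
      omega
    have e1 : 1 ≤ i + 1 := by omega
    have e2 : ⌈w s(x, z) / r⌉₊ - 1 - (i + 1) = d := by omega
    obtain ⟨q, hq⟩ := ih (i + 1) e1 hi2' e2
    refine ⟨SimpleGraph.Walk.cons hadj' q, ?_⟩
    rw [walkLen_cons, hq, subW_inr_inr]
    have hn : ⌈w s(x, z) / r⌉₊ - i = (⌈w s(x, z) / r⌉₊ - (i + 1)) + 1 := by omega
    rw [hn]
    push_cast
    ring

lemma exists_walk_edge (hwp : ∀ e ∈ G.edgeSet, 0 < w e) (hr : 0 < r)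
    {x z : V} (hadj : G.Adj x z) :
    ∃ q : (subGraph G w r).Walk (Sum.inl x) (Sum.inl z),
      walkLen (subW G w r) q = w s(x, z) := by
  have ha : 0 < w s(x, z) := hwp _ hadj
  have hK1 : 1 ≤ ⌈w s(x, z) / r⌉₊ := Nat.one_le_ceil_iff.mpr (by positivity)
  rcases eq_or_lt_of_le hK1 with hK | hK
  · -- degenerate: single edge
    have hadj' : (subGraph G w r).Adj (Sum.inl x) (Sum.inl z) := by
      rw [subGraph, SimpleGraph.fromRel_adj]
      exact ⟨by simp [hadj.ne], Or.inl ⟨hadj, hK.symm⟩⟩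
    refine ⟨SimpleGraph.Walk.cons hadj' SimpleGraph.Walk.nil, ?_⟩
    rw [walkLen_cons, walkLen_nil, subW_inl_inl]
    ring
  · -- K ≥ 2
    have hK2 : 2 ≤ ⌈w s(x, z) / r⌉₊ := hK
    have h11 : (1 : ℕ) ≤ ⌈w s(x, z) / r⌉₊ - 1 := by omega
    have hadj' : (subGraph G w r).Adj (Sum.inl x)
        (Sum.inr ⟨(x, z, 1), hadj, le_refl 1, h11⟩) := by
      rw [subGraph, SimpleGraph.fromRel_adj]
      exact ⟨by simp, Or.inl (Or.inl ⟨rfl, rfl⟩)⟩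
    obtain ⟨q, hq⟩ := exists_walk_from_idx G w r hwp hr hadj (⌈w s(x, z) / r⌉₊ - 1 - 1)
      1 (le_refl 1) h11 rfl
    refine ⟨SimpleGraph.Walk.cons hadj' q, ?_⟩
    rw [walkLen_cons, hq, subW_inl_inr G w r x ⟨(x, z, 1), hadj, le_refl 1, h11⟩ ⟨rfl, rfl⟩]
    rw [Nat.cast_sub hK1]
    push_cast
    ring

lemma exists_walk_of_walk (hwp : ∀ e ∈ G.edgeSet, 0 < w e) (hr : 0 < r)
    {x y : V} (p : G.Walk x y) :
    ∃ q : (subGraph G w r).Walk (Sum.inl x) (Sum.inl y),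
      walkLen (subW G w r) q = walkLen w p := by
  induction p with
  | nil => exact ⟨SimpleGraph.Walk.nil, rfl⟩
  | cons h p ih =>
    obtain ⟨q1, hq1⟩ := exists_walk_edge G w r hwp hr h
    obtain ⟨q2, hq2⟩ := ih
    refine ⟨q1.append q2, ?_⟩
    rw [walkLen_append, hq1, hq2, walkLen_cons]

/-- Lemma A: the distance in the refinement is at most the distance in `G`. -/
lemma subDist_le_wDist (hwp : ∀ e ∈ G.edgeSet, 0 < w e) (hr : 0 < r) (x y : V) :
    wDist (subGraph G w r) (subW G w r) (Sum.inl x) (Sum.inl y) ≤ wDist G w x y := by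
  refine le_iInf fun p => ?_
  obtain ⟨q, hq⟩ := exists_walk_of_walk G w r hwp hr p.1
  calc wDist (subGraph G w r) (subW G w r) (Sum.inl x) (Sum.inl y)
      ≤ ENNReal.ofReal (walkLen (subW G w r) q) :=
        wDist_le_walkLen _ (subW_edge_nonneg G w r hwp hr) q
    _ = ENNReal.ofReal (walkLen w p.1) := by rw [hq]

end lemA

section top

lemma reach_color_eq {V : Type} {K : SimpleGraph V} {A : Set V} {m : ℕ} {c : V → Fin m}
    {a b : V} (h : (colorGraph K A c).Reachable a b) : c a = c b := by
  obtain ⟨p⟩ := h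
  induction p with
  | nil => rfl
  | cons hadj p ih => exact (show c _ = c _ by obtain ⟨-, -, -, hc⟩ := hadj; exact hc).trans ih

lemma power_walk_dist {V : Type} (H : SimpleGraph V) (wH : Sym2 V → ℝ) (r : ℝ)
    (hw : ∀ e ∈ H.edgeSet, 0 ≤ wH e) {a b : V} (q : (powerGraph H wH r).Walk a b) :
    wDist H wH a b ≤ (q.length : ℝ≥0∞) * ENNReal.ofReal r := by
  induction q with
  | nil =>
    simpa using wDist_self_le wH hw
  | @cons a c b h p ih =>
    have h2 : wDist H wH a c ≤ ENNReal.ofReal r := by obtain ⟨-, h2⟩ := h; exact h2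
    calc wDist H wH a b ≤ wDist H wH a c + wDist H wH c b := wDist_triangle wH hw a c b
      _ ≤ ENNReal.ofReal r + (p.length : ℝ≥0∞) * ENNReal.ofReal r := add_le_add h2 ih
      _ = (((SimpleGraph.Walk.cons h p).length : ℕ) : ℝ≥0∞) * ENNReal.ofReal r := by
          rw [SimpleGraph.Walk.length_cons]
          push_cast
          ring

end top


/-- Theorem (Lemma `weight_wd_ad_1`): if there is a function `f` such that for every
`(G,φ) ∈ F` and every `ℓ > 0` the graph `(G,φ)^ℓ` has an `m`-colouring with weak diameter in
`(G,φ)^ℓ` at most `f(ℓ)`, then the asymptotic dimension of `F` is at most `m - 1`. -/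
theorem weight_wd_ad_one (F : Set WGraph) (m : ℕ) (hm : 0 < m)
    (h : ∃ f : ℝ → ℝ, (∀ x, 0 < x → 0 < f x) ∧
      ∀ W ∈ F, ∀ ℓ : ℝ, 0 < ℓ →
        ∃ c : SubVert W.G W.w ℓ → Fin m,
          HasWeakDiamLE (subPower W.G W.w ℓ) Set.univ (subPower W.G W.w ℓ) c (f ℓ)) :
    asdimLE F (m - 1) := by
  obtain ⟨f, hf, hcol⟩ := h
  refine ⟨fun t => (⌈f t⌉₊ : ℝ) * t, ?_, ?_⟩
  · intro t ht
    have h1 : 1 ≤ ⌈f t⌉₊ := Nat.one_le_ceil_iff.mpr (hf t ht)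
    have h2 : (1 : ℝ) ≤ (⌈f t⌉₊ : ℝ) := by exact_mod_cast h1
    show (0 : ℝ) < (⌈f t⌉₊ : ℝ) * t
    nlinarith
  · intro W hW r hr
    obtain ⟨c, hc⟩ := hcol W hW r hr
    have hmeq : m - 1 + 1 = m := Nat.succ_pred_eq_of_pos hm
    refine ⟨fun i => {S | ∃ v : W.V, c (Sum.inl v) = Fin.cast hmeq i ∧
        S = {u : W.V | (colorGraph (subPower W.G W.w r) Set.univ c).Reachable
          (Sum.inl u) (Sum.inl v)}}, ?_, ?_, ?_⟩
    · intro x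
      refine ⟨Fin.cast hmeq.symm (c (Sum.inl x)), _, ⟨x, ?_, rfl⟩, ?_⟩
      · ext : 1
        simp
      · exact SimpleGraph.Reachable.refl _
    · intro i S hS T hT hne x hx y hy
      obtain ⟨v, hv, rfl⟩ := hS
      obtain ⟨v', hv', rfl⟩ := hT
      by_contra hcon
      rw [not_lt] at hcon
      have hle : wDist W.G W.w x y ≤ ENNReal.ofReal r := hcon
      have hx' : (colorGraph (subPower W.G W.w r) Set.univ c).Reachable
          (Sum.inl x) (Sum.inl v) := hx
      have hy' : (colorGraph (subPower W.G W.w r) Set.univ c).Reachable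
          (Sum.inl y) (Sum.inl v') := hy
      have hreach_xy : (colorGraph (subPower W.G W.w r) Set.univ c).Reachable
          (Sum.inl x) (Sum.inl y) := by
        rcases eq_or_ne x y with rfl | hxy
        · exact SimpleGraph.Reachable.refl _
        · have hKadj : (subPower W.G W.w r).Adj (Sum.inl x) (Sum.inl y) := by
            show Sum.inl x ≠ Sum.inl y ∧ wDist (subGraph W.G W.w r) (subW W.G W.w r) (Sum.inl x) (Sum.inl y) ≤ ENNReal.ofReal r
            refine ⟨by simpa using hxy, ?_⟩
            calc wDist (subGraph W.G W.w r) (subW W.G W.w r) (Sum.inl x) (Sum.inl y)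
                ≤ wDist W.G W.w x y := subDist_le_wDist _ _ _ W.pos hr x y
              _ ≤ ENNReal.ofReal r := hle
          have hcxy : c (Sum.inl x) = c (Sum.inl y) := by
            have h1 : c (Sum.inl x) = c (Sum.inl v) := reach_color_eq hx'
            have h2 : c (Sum.inl y) = c (Sum.inl v') := reach_color_eq hy'
            rw [h1, h2, hv, hv']
          exact SimpleGraph.Adj.reachable (G := colorGraph (subPower W.G W.w r) Set.univ c)
            (⟨hKadj, Set.mem_univ _, Set.mem_univ _, hcxy⟩ : (subPower W.G W.w r).Adj (Sum.inl x) (Sum.inl y) ∧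
              Sum.inl x ∈ Set.univ ∧ Sum.inl y ∈ Set.univ ∧ c (Sum.inl x) = c (Sum.inl y))
      apply hne
      ext u
      simp only [Set.mem_setOf_eq]
      constructor
      · intro hu
        exact hu.trans (hx'.symm.trans (hreach_xy.trans hy'))
      · intro hu
        exact hu.trans (hy'.symm.trans (hreach_xy.symm.trans hx'))
    · intro i S hS x hx y hy
      obtain ⟨v, hv, rfl⟩ := hS
      have hx' : (colorGraph (subPower W.G W.w r) Set.univ c).Reachable
          (Sum.inl x) (Sum.inl v) := hx
      have hy' : (colorGraph (subPower W.G W.w r) Set.univ c).Reachable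
          (Sum.inl y) (Sum.inl v) := hy
      have hreach : (colorGraph (subPower W.G W.w r) Set.univ c).Reachable
          (Sum.inl x) (Sum.inl y) := hx'.trans hy'.symm
      have hhop := hc (Sum.inl x) (Set.mem_univ _) (Sum.inl y) (Set.mem_univ _) hreach
      have hfr : 0 < f r := hf r hr
      have hlt : hopDist (subPower W.G W.w r) (Sum.inl x) (Sum.inl y)
          < ENNReal.ofReal (f r) + 1 :=
        lt_of_le_of_lt hhop (ENNReal.lt_add_right ENNReal.ofReal_ne_top one_ne_zero)
      rw [hopDist, iInf_lt_iff] at hlt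
      obtain ⟨q, hq⟩ := hlt
      have hlen : (q.length : ℝ) < f r + 1 := by
        rw [show ((q.length : ℕ) : ℝ≥0∞) = ENNReal.ofReal (q.length : ℝ) from
            (ENNReal.ofReal_natCast _).symm,
          show (ENNReal.ofReal (f r) + 1 : ℝ≥0∞) = ENNReal.ofReal (f r + 1) by
            rw [ENNReal.ofReal_add hfr.le zero_le_one, ENNReal.ofReal_one]] at hq
        exact (ENNReal.ofReal_lt_ofReal_iff (by linarith)).mp hq
      have hlen2 : q.length ≤ ⌈f r⌉₊ := by
        have h2 : (q.length : ℝ) < (⌈f r⌉₊ : ℝ) + 1 := by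
          have := Nat.le_ceil (f r)
          linarith
        have h3 : q.length < ⌈f r⌉₊ + 1 := by exact_mod_cast h2
        omega
      have hchain := power_walk_dist (subGraph W.G W.w r) (subW W.G W.w r) r
        (subW_edge_nonneg _ _ _ W.pos hr) q
      calc W.dist x y
          ≤ wDist (subGraph W.G W.w r) (subW W.G W.w r) (Sum.inl x) (Sum.inl y) :=
            wDist_le_subDist _ _ _ W.pos hr x y
        _ ≤ (q.length : ℝ≥0∞) * ENNReal.ofReal r := hchain
        _ ≤ (⌈f r⌉₊ : ℝ≥0∞) * ENNReal.ofReal r :=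
            mul_le_mul_left (by exact_mod_cast hlen2) _
        _ = ENNReal.ofReal ((⌈f r⌉₊ : ℝ) * r) := by
            rw [ENNReal.ofReal_mul (Nat.cast_nonneg _), ENNReal.ofReal_natCast]
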